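/- Let (M_n) be a locally square integrable real martingale with M_0 = 0 that is heavy on left. Then for all x > 0 and y > 0, P(M_n ≥ x and [M]_n ≤ y) ≤ exp(−x²/(2y)). -/

import Mathlib

open MeasureTheory ProbabilityTheory Real Finset

/-- The truncated version `T_a(x) = min(|x|, a) · sign(x)` of a real number. -/
noncomputable def truncAt (a : ℝ) (x : ℝ) : ℝ := min |x| a * Real.sign x

/-- A martingale `M` is heavy on left if all its increments are conditionally heavy on left:
for all `n ≥ 1` and all `a > 0`, `E[T_a(ΔM_n) | ℱ_{n−1}] ≤ 0` almost surely. -/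
def Martingale.IsHeavyOnLeft {Ω : Type*} {m0 : MeasurableSpace Ω} (μ : Measure Ω)
    (ℱ : Filtration ℕ m0) (M : ℕ → Ω → ℝ) : Prop :=
  ∀ n : ℕ, 1 ≤ n → ∀ a : ℝ, 0 < a →
    ∀ᵐ ω ∂μ, (μ[fun ω' => truncAt a (M n ω' - M (n - 1) ω') | ℱ (n - 1)]) ω ≤ 0

lemma truncAt_eq (a x : ℝ) (ha : 0 ≤ a) : truncAt a x = max (min x a) (-a) := by
  rcases lt_trichotomy x 0 with hx | hx | hx
  · rw [truncAt, Real.sign_of_neg hx, abs_of_neg hx,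
      min_eq_left (show x ≤ a by linarith)]
    rcases le_total (-x) a with h | h
    · rw [min_eq_left h, max_eq_left (show -a ≤ x by linarith)]; ring
    · rw [min_eq_right h, max_eq_right (show x ≤ -a by linarith)]; ring
  · simp [hx, truncAt, Real.sign_zero, max_eq_left (by linarith : -a ≤ (0:ℝ)), min_eq_left ha]
  · rw [truncAt, Real.sign_of_pos hx, abs_of_pos hx, mul_one, eq_comm,
      max_eq_left (le_min (by linarith) (by linarith))]

lemma truncAt_neg (a x : ℝ) (ha : 0 ≤ a) : truncAt a (-x) = - truncAt a x := by
  rw [truncAt_eq a _ ha, truncAt_eq a x ha]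
  rcases le_total x a with h | h <;> rcases le_total (-a) x with h' | h' <;>
    simp [min_eq_left, min_eq_right, h, h', max_def, min_def] <;> split_ifs <;> linarith

lemma truncAt_of_nonneg {a x : ℝ} (ha : 0 ≤ a) (hx : 0 ≤ x) : truncAt a x = min x a := by
  rw [truncAt_eq a x ha, max_eq_left]
  rcases le_total x a with h | h
  · rw [min_eq_left h]; linarith
  · rw [min_eq_right h]; linarith

lemma abs_truncAt_le (a x : ℝ) (ha : 0 ≤ a) : |truncAt a x| ≤ a := by
  rw [truncAt_eq a x ha, abs_le]
  constructor
  · exact le_max_right _ _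
  · apply max_le _ (by linarith)
    exact le_trans (min_le_right _ _) le_rfl

lemma continuous_truncAt (a : ℝ) (ha : 0 ≤ a) : Continuous (truncAt a) := by
  have : truncAt a = fun x => max (min x a) (-a) := funext fun x => truncAt_eq a x ha
  rw [this]
  exact (continuous_id.min continuous_const).max continuous_const

/-- the function `g`. -/
noncomputable def gfun (t v : ℝ) : ℝ := 1 - Real.exp (-(t*v) - t^2*v^2/2)

/-- derivative of `g`. -/
noncomputable def gd (t v : ℝ) : ℝ := (t + t^2*v) * Real.exp (-(t*v) - t^2*v^2/2)

lemma gfun_zero (t : ℝ) : gfun t 0 = 0 := by simp [gfun]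

lemma gfun_le_one (t v : ℝ) : gfun t v ≤ 1 := by
  have := Real.exp_pos (-(t*v) - t^2*v^2/2)
  simp only [gfun]; linarith

lemma hasDerivAt_inner (t v : ℝ) :
    HasDerivAt (fun w => -(t*w) - t^2*w^2/2) (-t - t^2*v) v := by
  have h1 : HasDerivAt (fun w : ℝ => t*w) t v := by
    simpa using (hasDerivAt_id v).const_mul t
  have h2 : HasDerivAt (fun w : ℝ => t^2*w^2/2) (t^2*v) v := by
    have := ((hasDerivAt_pow 2 v).const_mul (t^2/2))
    have h := this.congr_of_eventuallyEq
      (Filter.Eventually.of_forall (fun w => by ring :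
        ∀ w : ℝ, t^2*w^2/2 = t^2/2 * w^2))
    refine h.congr_deriv ?_; push_cast; ring
  exact h1.neg.sub h2

lemma hasDerivAt_gfun (t v : ℝ) : HasDerivAt (gfun t) (gd t v) v := by
  have h := ((hasDerivAt_inner t v).exp).const_sub 1
  refine h.congr_deriv ?_
  rw [gd]; ring

lemma hasDerivAt_gd (t v : ℝ) :
    HasDerivAt (gd t) ((t^2 - (t + t^2*v)^2) * Real.exp (-(t*v) - t^2*v^2/2)) v := by
  have h1 : HasDerivAt (fun w : ℝ => t + t^2*w) (t^2) v := by
    simpa using ((hasDerivAt_id v).const_mul (t^2)).const_add t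
  have h2 := (hasDerivAt_inner t v).exp
  have := h1.mul h2
  refine this.congr_deriv ?_
  ring

lemma continuous_gfun (t : ℝ) : Continuous (gfun t) := by
  unfold gfun
  fun_prop

lemma gfun_concave {t : ℝ} (ht : 0 ≤ t) : ConcaveOn ℝ (Set.Ici 0) (gfun t) := by
  apply concaveOn_of_hasDerivWithinAt2_nonpos (f' := gd t)
    (f'' := fun v => (t^2 - (t + t^2*v)^2) * Real.exp (-(t*v) - t^2*v^2/2))
    (convex_Ici 0) (continuous_gfun t).continuousOn
  · intro v _; exact (hasDerivAt_gfun t v).hasDerivWithinAt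
  · intro v _; exact (hasDerivAt_gd t v).hasDerivWithinAt
  · intro v hv
    rw [interior_Ici] at hv
    have hv' : (0:ℝ) < v := hv
    have h1 : t ≤ t + t^2*v := by nlinarith
    have h2 : t^2 - (t + t^2*v)^2 ≤ 0 := by nlinarith
    exact mul_nonpos_of_nonpos_of_nonneg h2 (Real.exp_pos _).le

lemma gfun_mono {t a b : ℝ} (ht : 0 ≤ t) (ha : 0 ≤ a) (hab : a ≤ b) :
    gfun t a ≤ gfun t b := by
  have := Real.exp_le_exp.2 (show -(t*b) - t^2*b^2/2 ≤ -(t*a) - t^2*a^2/2 by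
    nlinarith [mul_nonneg ht (sub_nonneg.2 hab),
      mul_nonneg (mul_nonneg (sub_nonneg.2 hab) (show (0:ℝ) ≤ a + b by linarith)) (sq_nonneg t)])
  simp only [gfun]; linarith

lemma gd_nonneg {t v : ℝ} (ht : 0 ≤ t) (hv : 0 ≤ v) : 0 ≤ gd t v :=
  mul_nonneg (by nlinarith) (Real.exp_pos _).le

lemma gd_le {t v : ℝ} (ht : 0 ≤ t) (hv : 0 ≤ v) : gd t v ≤ t := by
  have h1 : Real.exp (-(t*v) - t^2*v^2/2) ≤ Real.exp (-(t*v)) :=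
    Real.exp_le_exp.2 (by nlinarith)
  have h2 : (t + t^2*v) * Real.exp (-(t*v) - t^2*v^2/2) ≤ (t + t^2*v) * Real.exp (-(t*v)) :=
    mul_le_mul_of_nonneg_left h1 (by nlinarith)
  refine le_trans h2 ?_
  rw [Real.exp_neg, mul_inv_le_iff₀' (Real.exp_pos _)]
  nlinarith [Real.add_one_le_exp (t*v)]

lemma gfun_lipschitz {t a b : ℝ} (ht : 0 ≤ t) (ha : 0 ≤ a) (hab : a ≤ b) :
    gfun t b - gfun t a ≤ t * (b - a) := by
  have hmono : MonotoneOn (fun w => t*w - gfun t w) (Set.Ici 0) := by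
    apply monotoneOn_of_deriv_nonneg (convex_Ici 0)
    · exact ((continuous_const.mul continuous_id).sub (continuous_gfun t)).continuousOn
    · intro w _
      exact (((hasDerivAt_id w).const_mul t).sub (hasDerivAt_gfun t w)).differentiableAt.differentiableWithinAt
    · intro w hw
      rw [interior_Ici] at hw
      have hd : deriv (fun w => t*w - gfun t w) w = t - gd t w := by
        have := (((hasDerivAt_id w).const_mul t).sub (hasDerivAt_gfun t w))
        exact (this.congr_deriv (show t * 1 - gd t w = t - gd t w by ring)).deriv
      rw [hd]
      have := gd_le ht (le_of_lt hw)
      linarith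
  have := hmono ha (le_trans ha hab) hab
  simp only at this
  linarith

/-- slope of the chord of `gfun t` on `[i*δ, (i+1)*δ]`. -/
noncomputable def sl (t δ : ℝ) (i : ℕ) : ℝ := (gfun t (((i:ℝ)+1)*δ) - gfun t ((i:ℝ)*δ)) / δ

lemma sl_nonneg {t δ : ℝ} (ht : 0 ≤ t) (hδ : 0 < δ) (i : ℕ) : 0 ≤ sl t δ i := by
  apply div_nonneg _ hδ.le
  have := gfun_mono (t := t) ht (by positivity : (0:ℝ) ≤ (i:ℝ)*δ)
    (by nlinarith : (i:ℝ)*δ ≤ ((i:ℝ)+1)*δ)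
  linarith

lemma sl_anti {t δ : ℝ} (ht : 0 ≤ t) (hδ : 0 < δ) (i : ℕ) : sl t δ (i+1) ≤ sl t δ i := by
  have h := (gfun_concave ht).slope_anti_adjacent (x := (i:ℝ)*δ) (y := ((i:ℝ)+1)*δ)
    (z := ((i:ℝ)+2)*δ) (Set.mem_Ici.2 (by positivity)) (Set.mem_Ici.2 (by positivity))
    (by nlinarith) (by nlinarith)
  have e1 : ((i:ℝ)+2)*δ - ((i:ℝ)+1)*δ = δ := by ring
  have e2 : ((i:ℝ)+1)*δ - (i:ℝ)*δ = δ := by ring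
  rw [e1, e2] at h
  unfold sl
  push_cast
  rw [show ((i:ℝ) + 1 + 1) = (i:ℝ) + 2 from by ring]
  exact h

/-- chord lies below the concave function `gfun`. -/
lemma chord_le {t δ v : ℝ} (ht : 0 ≤ t) (hδ : 0 < δ) (hv : 0 ≤ v) (i : ℕ) :
    sl t δ i * (min v (((i:ℝ)+1)*δ) - min v ((i:ℝ)*δ))
      ≤ gfun t (min v (((i:ℝ)+1)*δ)) - gfun t (min v ((i:ℝ)*δ)) := by
  by_cases hvi : v ≤ (i:ℝ)*δ
  · rw [min_eq_left hvi, min_eq_left (by nlinarith : v ≤ ((i:ℝ)+1)*δ)]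
    simp
  · push_neg at hvi
    rw [min_eq_right hvi.le]
    set w := min v (((i:ℝ)+1)*δ) with hw
    have hwi : (i:ℝ)*δ ≤ w := le_min hvi.le (by nlinarith)
    rcases eq_or_lt_of_le hwi with heq | hlt
    · rw [← heq]; simp
    · have hwle : w ≤ ((i:ℝ)+1)*δ := min_le_right _ _
      have hne1 : w ≠ (i:ℝ)*δ := ne_of_gt hlt
      have hne2 : ((i:ℝ)+1)*δ ≠ (i:ℝ)*δ := by nlinarith
      have hanti := (gfun_concave ht).slope_anti (x := (i:ℝ)*δ) (Set.mem_Ici.2 (by positivity))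
      have h := hanti (Set.mem_diff_singleton.2 ⟨Set.mem_Ici.2 (le_trans (by positivity) hwi), hne1⟩)
        (Set.mem_diff_singleton.2 ⟨Set.mem_Ici.2 (by positivity), hne2⟩) hwle
      rw [slope_def_field, slope_def_field] at h
      have hslope : sl t δ i ≤ (gfun t w - gfun t ((i:ℝ)*δ)) / (w - (i:ℝ)*δ) := by
        unfold sl
        rw [show ((i:ℝ)+1)*δ - (i:ℝ)*δ = δ from by ring] at h
        exact h
      have hpos : 0 < w - (i:ℝ)*δ := by linarith
      calc sl t δ i * (w - (i:ℝ)*δ)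
          ≤ ((gfun t w - gfun t ((i:ℝ)*δ)) / (w - (i:ℝ)*δ)) * (w - (i:ℝ)*δ) :=
            mul_le_mul_of_nonneg_right hslope hpos.le
        _ = gfun t w - gfun t ((i:ℝ)*δ) := by field_simp

/-- Abel-type summation identity. -/
lemma abel_aux (s m : ℕ → ℝ) (K : ℕ) :
    (∑ i ∈ range K, (s i - s (i+1)) * m (i+1)) + s K * m K
      = (∑ i ∈ range K, s i * (m (i+1) - m i)) + s 0 * m 0 := by
  induction K with
  | zero => simp
  | succ K ih =>
    rw [Finset.sum_range_succ, Finset.sum_range_succ]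
    have : (∑ i ∈ range K, (s i - s (i+1)) * m (i+1))
        = (∑ i ∈ range K, s i * (m (i+1) - m i)) + s 0 * m 0 - s K * m K := by linarith
    rw [this]; ring

lemma key_sum (s m : ℕ → ℝ) (hm0 : m 0 = 0) (K : ℕ) :
    ∑ i ∈ range K, (s i - if i + 1 < K then s (i+1) else 0) * m (i+1)
      = ∑ i ∈ range K, s i * (m (i+1) - m i) := by
  cases K with
  | zero => simp
  | succ K =>
    have h1 : ∑ i ∈ range (K+1), (s i - if i + 1 < K + 1 then s (i+1) else 0) * m (i+1)
        = (∑ i ∈ range K, (s i - s (i+1)) * m (i+1)) + s K * m (K+1) := by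
      rw [Finset.sum_range_succ]
      have : ∀ i ∈ range K, (s i - if i + 1 < K + 1 then s (i+1) else 0) * m (i+1)
          = (s i - s (i+1)) * m (i+1) := by
        intro i hi
        rw [if_pos (by simpa using Nat.succ_lt_succ (Finset.mem_range.1 hi))]
      rw [Finset.sum_congr rfl this]
      rw [if_neg (by omega)]
      ring
    have h2 := abel_aux s m (K+1)
    rw [Finset.sum_range_succ (f := fun i => (s i - s (i+1)) * m (i+1))] at h2
    rw [h1, hm0] at *
    linarith [h2]

lemma R_le_g {t δ v : ℝ} (ht : 0 ≤ t) (hδ : 0 < δ) (hv : 0 ≤ v) (K : ℕ) :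
    ∑ i ∈ range K, sl t δ i * (min v (((i:ℝ)+1)*δ) - min v ((i:ℝ)*δ)) ≤ gfun t v := by
  have h1 : ∑ i ∈ range K, sl t δ i * (min v (((i:ℝ)+1)*δ) - min v ((i:ℝ)*δ))
      ≤ ∑ i ∈ range K, (gfun t (min v (((i:ℝ)+1)*δ)) - gfun t (min v ((i:ℝ)*δ))) :=
    Finset.sum_le_sum fun i _ => chord_le ht hδ hv i
  have h2 := Finset.sum_range_sub (fun i => gfun t (min v ((i:ℝ)*δ))) K
  simp only [Nat.cast_add, Nat.cast_one, Nat.cast_zero, zero_mul, min_eq_right hv,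
    gfun_zero, sub_zero] at h2
  have h4 : gfun t (min v ((K:ℝ)*δ)) ≤ gfun t v :=
    gfun_mono ht (le_min hv (by positivity)) (min_le_left _ _)
  rw [h2] at h1
  linarith

lemma g_le_R {t δ v : ℝ} (ht : 0 < t) (hδ : 0 < δ) (hv : 0 ≤ v) (K : ℕ) :
    gfun t v ≤ (∑ i ∈ range K, sl t δ i * (min v (((i:ℝ)+1)*δ) - min v ((i:ℝ)*δ)))
      + t*δ + Real.exp (-(t*((K:ℝ)*δ))) := by
  set m : ℕ → ℝ := fun i => min v ((i:ℝ)*δ) with hm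
  -- tail bound
  have htail : gfun t v - gfun t (m K) ≤ Real.exp (-(t*((K:ℝ)*δ))) := by
    by_cases hvK : v ≤ (K:ℝ)*δ
    · have : m K = v := min_eq_left hvK
      rw [this]
      simp only [sub_self]
      exact (Real.exp_pos _).le
    · push_neg at hvK
      have hmK : m K = (K:ℝ)*δ := min_eq_right hvK.le
      rw [hmK]
      have h1 : gfun t v ≤ 1 := gfun_le_one t v
      have h2 : 1 - gfun t ((K:ℝ)*δ) ≤ Real.exp (-(t*((K:ℝ)*δ))) := by
        rw [gfun]
        have : Real.exp (-(t*((K:ℝ)*δ)) - t^2*((K:ℝ)*δ)^2/2) ≤ Real.exp (-(t*((K:ℝ)*δ))) :=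
          Real.exp_le_exp.2 (by nlinarith [sq_nonneg ((K:ℝ)*δ), sq_nonneg t])
        linarith
      linarith
  -- middle: sum of per-interval errors
  have hmid : gfun t (m K) - (∑ i ∈ range K, sl t δ i * (m (i+1) - m i)) ≤ t*δ := by
    have hTele : gfun t (m K) = ∑ i ∈ range K, (gfun t (m (i+1)) - gfun t (m i)) := by
      rw [Finset.sum_range_sub (fun i => gfun t (m i)) K]
      have : m 0 = 0 := by simp [hm, min_eq_right hv]
      rw [this, gfun_zero]; ring
    rw [hTele, ← Finset.sum_sub_distrib]
    set F : ℕ → ℝ := fun i => gfun t (m (i+1)) - gfun t (m i) - sl t δ i * (m (i+1) - m i)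
      with hF
    show ∑ i ∈ range K, F i ≤ t*δ
    set i₀ := Nat.floor (v/δ) with hi₀
    have hzero : ∀ i ∈ range K, i ≠ i₀ → F i = 0 := by
      intro i _ hne
      rcases lt_or_gt_of_ne hne with hlt | hgt
      · -- i < i₀ : (i+1)*δ ≤ v
        have h1 : ((i:ℝ)+1) ≤ (i₀:ℝ) := by exact_mod_cast hlt
        have h2 : (i₀:ℝ) ≤ v/δ := Nat.floor_le (by positivity)
        have h3 : ((i:ℝ)+1)*δ ≤ v := by
          rw [← le_div_iff₀ hδ]; linarith
        have hmi1 : m (i+1) = ((i:ℝ)+1)*δ := by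
          simp only [hm]; push_cast; exact min_eq_right (by push_cast at h3 ⊢; linarith)
        have hmi : m i = (i:ℝ)*δ := min_eq_right (by nlinarith)
        rw [hF]
        simp only [hmi1, hmi]
        rw [sl]
        field_simp
        ring
      · -- i₀ < i : v ≤ i*δ
        have h1 : v/δ < (i₀:ℝ)+1 := Nat.lt_floor_add_one _
        have h2 : ((i₀:ℝ)+1) ≤ (i:ℝ) := by exact_mod_cast hgt
        have h3 : v ≤ (i:ℝ)*δ := by
          rw [← div_le_iff₀ hδ] at *; linarith
        have hmi : m i = v := min_eq_left h3
        have hmi1 : m (i+1) = v := by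
          simp only [hm]; push_cast; exact min_eq_left (by nlinarith)
        rw [hF]
        simp only [hmi1, hmi]
        ring
    by_cases hi₀K : i₀ ∈ range K
    · have hsum : ∑ i ∈ range K, F i = F i₀ :=
        Finset.sum_eq_single i₀ (fun b hb hbne => hzero b hb hbne)
          (fun h => absurd hi₀K h)
      rw [hsum]
      have hmono : m i₀ ≤ m (i₀+1) := by
        apply min_le_min le_rfl
        push_cast; nlinarith
      have hdiff : m (i₀+1) - m i₀ ≤ δ := by
        have : m (i₀+1) ≤ m i₀ + δ := by
          simp only [hm]
          push_cast
          rcases le_total v ((i₀:ℝ)*δ) with h | h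
          · rw [min_eq_left h]
            have : min v (((i₀:ℝ)+1)*δ) ≤ v := min_le_left _ _
            linarith
          · rw [min_eq_right h]
            have : min v (((i₀:ℝ)+1)*δ) ≤ ((i₀:ℝ)+1)*δ := min_le_right _ _
            linarith
        linarith
      have hm0le : 0 ≤ m i₀ := le_min hv (by positivity)
      have hlip : gfun t (m (i₀+1)) - gfun t (m i₀) ≤ t * (m (i₀+1) - m i₀) :=
        gfun_lipschitz ht.le hm0le hmono
      have hslnn : 0 ≤ sl t δ i₀ * (m (i₀+1) - m i₀) :=
        mul_nonneg (sl_nonneg ht.le hδ i₀) (by linarith)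
      have : F i₀ ≤ t * (m (i₀+1) - m i₀) := by rw [hF]; simp only; linarith
      have h2 : t * (m (i₀+1) - m i₀) ≤ t * δ :=
        mul_le_mul_of_nonneg_left hdiff ht.le
      linarith
    · have hsum : ∑ i ∈ range K, F i = 0 :=
        Finset.sum_eq_zero (fun i hi => hzero i hi (fun h => hi₀K (h ▸ hi)))
      rw [hsum]
      positivity
  have hQ : ∑ i ∈ range K, sl t δ i * (m (i+1) - m i)
      = ∑ i ∈ range K, sl t δ i * (min v (((i:ℝ)+1)*δ) - min v ((i:ℝ)*δ)) := by
    apply Finset.sum_congr rfl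
    intro i _
    simp only [hm]
    push_cast
    ring_nf
  rw [hQ] at hmid
  linarith

/-- Pointwise bound `exp(u - u²/2) ≤ 2 - exp(-u - u²/2)` (from `cosh u ≤ exp(u²/2)`). -/
lemma exp_pointwise (u : ℝ) :
    Real.exp (u - u^2/2) ≤ 2 - Real.exp (-u - u^2/2) := by
  have h := Real.cosh_le_exp_half_sq u
  rw [Real.cosh_eq] at h
  have h2 : Real.exp u + Real.exp (-u) ≤ 2 * Real.exp (u^2/2) := by linarith
  have h3 := mul_le_mul_of_nonneg_right h2 (Real.exp_pos (-(u^2/2))).le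
  rw [add_mul, ← Real.exp_add, ← Real.exp_add, mul_assoc, ← Real.exp_add] at h3
  have e1 : u + -(u^2/2) = u - u^2/2 := by ring
  have e2 : -u + -(u^2/2) = -u - u^2/2 := by ring
  have e3 : u^2/2 + -(u^2/2) = 0 := by ring
  rw [e1, e2, e3, Real.exp_zero, mul_one] at h3
  linarith

/-- The key approximation: the exponential bound via a positive combination of truncations. -/
lemma exists_approx {t : ℝ} (ht : 0 < t) {ε : ℝ} (hε : 0 < ε) :
    ∃ (K : ℕ) (a c : ℕ → ℝ), (∀ i, 0 < a i) ∧ (∀ i, 0 ≤ c i) ∧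
      ∀ v : ℝ, Real.exp (t*v - t^2*v^2/2)
        ≤ 1 + ε + ∑ i ∈ range K, c i * truncAt (a i) v := by
  set δ : ℝ := ε/(2*t) with hδdef
  have hδ : 0 < δ := by positivity
  obtain ⟨K, hK⟩ : ∃ K : ℕ, Real.exp (-(t*((K:ℝ)*δ))) ≤ ε/2 := by
    obtain ⟨K, hK⟩ := exists_nat_ge ((max 0 (Real.log (2/ε))) / (t*δ))
    refine ⟨K, ?_⟩
    have h1 : max 0 (Real.log (2/ε)) ≤ (K:ℝ)*(t*δ) := by
      rw [div_le_iff₀ (by positivity)] at hK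
      linarith
    have h2 : Real.log (2/ε) ≤ t*((K:ℝ)*δ) := by
      have := le_max_right 0 (Real.log (2/ε))
      nlinarith [le_trans this h1]
    calc Real.exp (-(t*((K:ℝ)*δ))) ≤ Real.exp (-(Real.log (2/ε))) :=
          Real.exp_le_exp.2 (by linarith)
      _ = ε/2 := by
          rw [Real.exp_neg, Real.exp_log (by positivity)]
          field_simp
  refine ⟨K, fun i => ((i:ℝ)+1)*δ, fun i => sl t δ i - (if i + 1 < K then sl t δ (i+1) else 0),
    fun i => by positivity, fun i => ?_, fun v => ?_⟩
  · show 0 ≤ sl t δ i - if i + 1 < K then sl t δ (i+1) else 0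
    split_ifs with h
    · linarith [sl_anti ht.le hδ i]
    · simpa using sl_nonneg ht.le hδ i
  · -- pointwise bound
    have htδ : t * δ = ε/2 := by
      rw [hδdef]; field_simp
    rcases le_or_gt 0 v with hv | hv
    · -- nonnegative case
      have hQ : ∑ i ∈ range K,
            (sl t δ i - if i + 1 < K then sl t δ (i+1) else 0) * truncAt (((i:ℝ)+1)*δ) v
          = ∑ i ∈ range K, sl t δ i * (min v (((i:ℝ)+1)*δ) - min v ((i:ℝ)*δ)) := by
        have h1 : ∀ i ∈ range K,
            (sl t δ i - if i + 1 < K then sl t δ (i+1) else 0) * truncAt (((i:ℝ)+1)*δ) v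
            = (sl t δ i - if i + 1 < K then sl t δ (i+1) else 0) * min v (((i:ℝ)+1)*δ) := by
          intro i _
          rw [truncAt_of_nonneg (by positivity) hv]
        rw [Finset.sum_congr rfl h1]
        have := key_sum (sl t δ) (fun i => min v ((i:ℝ)*δ)) (by simp [min_eq_right hv]) K
        push_cast at this
        exact this
      rw [hQ]
      have h1 := g_le_R ht hδ hv K
      have h2 : Real.exp (t*v - t^2*v^2/2) ≤ 1 + gfun t v := by
        have := exp_pointwise (t*v)
        have e1 : t*v - (t*v)^2/2 = t*v - t^2*v^2/2 := by ring
        have e2 : -(t*v) - (t*v)^2/2 = -(t*v) - t^2*v^2/2 := by ring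
        rw [e1, e2] at this
        rw [gfun]
        linarith
      rw [htδ] at h1
      linarith
    · -- negative case
      have hQ : ∑ i ∈ range K,
            (sl t δ i - if i + 1 < K then sl t δ (i+1) else 0) * truncAt (((i:ℝ)+1)*δ) v
          = - ∑ i ∈ range K, sl t δ i * (min (-v) (((i:ℝ)+1)*δ) - min (-v) ((i:ℝ)*δ)) := by
        have h1 : ∀ i ∈ range K,
            (sl t δ i - if i + 1 < K then sl t δ (i+1) else 0) * truncAt (((i:ℝ)+1)*δ) v
            = -((sl t δ i - if i + 1 < K then sl t δ (i+1) else 0) * min (-v) (((i:ℝ)+1)*δ)) := by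
          intro i _
          have : truncAt (((i:ℝ)+1)*δ) v = - truncAt (((i:ℝ)+1)*δ) (-v) := by
            rw [← truncAt_neg _ _ (by positivity), neg_neg]
          rw [this, truncAt_of_nonneg (by positivity) (by linarith)]
          ring
        rw [Finset.sum_congr rfl h1, Finset.sum_neg_distrib, neg_inj]
        have := key_sum (sl t δ) (fun i => min (-v) ((i:ℝ)*δ))
          (by simp [min_eq_right (by linarith : (0:ℝ) ≤ -v)]) K
        push_cast at this
        exact this
      rw [hQ]
      have h1 := R_le_g ht.le hδ (by linarith : (0:ℝ) ≤ -v) K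
      have h2 : Real.exp (t*v - t^2*v^2/2) = 1 - gfun t (-v) := by
        rw [gfun]
        have : -(t*(-v)) - t^2*(-v)^2/2 = t*v - t^2*v^2/2 := by ring
        rw [this]
        ring
      rw [h2]
      linarith

section Prob

variable {Ω : Type*} {m0 : MeasurableSpace Ω} {μ : Measure Ω} [IsProbabilityMeasure μ]
  {ℱ : Filtration ℕ m0} {M : ℕ → Ω → ℝ}

lemma Z_stronglyMeasurable (hM : StronglyAdapted ℱ M) (t : ℝ) (m : ℕ) :
    StronglyMeasurable[ℱ m] (fun ω => Real.exp (∑ k ∈ Finset.Icc 1 m,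
      (t*(M k ω - M (k-1) ω) - t^2*(M k ω - M (k-1) ω)^2/2))) := by
  apply Real.continuous_exp.comp_stronglyMeasurable
  apply Finset.stronglyMeasurable_fun_sum
  intro k hk
  have hk1 : k ≤ m := (Finset.mem_Icc.1 hk).2
  have h1 : StronglyMeasurable[ℱ m] (M k) := (hM k).mono (ℱ.mono hk1)
  have h2 : StronglyMeasurable[ℱ m] (M (k-1)) :=
    (hM (k-1)).mono (ℱ.mono (le_trans (Nat.sub_le k 1) hk1))
  have hd := h1.sub h2
  have hcont : Continuous (fun z : ℝ => t*z - t^2*z^2/2) := by fun_prop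
  exact hcont.comp_stronglyMeasurable hd

lemma Z_bound (t : ℝ) (m : ℕ) (ω : Ω) :
    Real.exp (∑ k ∈ Finset.Icc 1 m,
      (t*(M k ω - M (k-1) ω) - t^2*(M k ω - M (k-1) ω)^2/2)) ≤ Real.exp ((m:ℝ)*(1/2)) := by
  apply Real.exp_le_exp.2
  have h := Finset.sum_le_card_nsmul (Finset.Icc 1 m)
    (fun k => t*(M k ω - M (k-1) ω) - t^2*(M k ω - M (k-1) ω)^2/2) (1/2)
    (fun k _ => by nlinarith [sq_nonneg (t*(M k ω - M (k-1) ω) - 1)])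
  rw [Nat.card_Icc] at h
  simpa [nsmul_eq_mul] using h

lemma integral_Z_le (hM : Martingale M ℱ μ)
    (hheavy : Martingale.IsHeavyOnLeft μ ℱ M) {t : ℝ} (ht : 0 < t) {ε : ℝ} (hε : 0 < ε)
    (n : ℕ) :
    ∫ ω, Real.exp (∑ k ∈ Finset.Icc 1 n,
      (t*(M k ω - M (k-1) ω) - t^2*(M k ω - M (k-1) ω)^2/2)) ∂μ ≤ (1+ε)^n := by
  obtain ⟨K, a, c, ha, hc, hpt⟩ := exists_approx ht hε
  set B : ℝ := ∑ i ∈ range K, c i * a i with hB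
  induction n with
  | zero => simp
  | succ m ih =>
    set Z : ℕ → Ω → ℝ := fun m ω => Real.exp (∑ k ∈ Finset.Icc 1 m,
      (t*(M k ω - M (k-1) ω) - t^2*(M k ω - M (k-1) ω)^2/2)) with hZ
    set Qd : Ω → ℝ := fun ω => ∑ i ∈ range K, c i * truncAt (a i) (M (m+1) ω - M m ω)
      with hQd
    -- basic facts
    have hZpos : ∀ j ω, 0 < Z j ω := fun j ω => Real.exp_pos _
    have hZle : ∀ j ω, Z j ω ≤ Real.exp ((j:ℝ)*(1/2)) := fun j ω => Z_bound t j ω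
    have hZsucc : ∀ ω, Z (m+1) ω = Z m ω *
        Real.exp (t*(M (m+1) ω - M m ω) - t^2*(M (m+1) ω - M m ω)^2/2) := by
      intro ω
      rw [hZ]
      simp only
      rw [Finset.sum_Icc_succ_top (Nat.le_add_left 1 m), Real.exp_add]
      simp [Nat.add_sub_cancel]
    -- measurability
    have hZm_sm : StronglyMeasurable[ℱ m] (Z m) := Z_stronglyMeasurable hM.stronglyAdapted t m
    have hZm_asm : AEStronglyMeasurable (Z m) μ :=
      (hZm_sm.mono (ℱ.le m)).aestronglyMeasurable
    have hD_sm : StronglyMeasurable (fun ω => M (m+1) ω - M m ω) :=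
      ((hM.stronglyAdapted (m+1)).mono (ℱ.le (m+1))).sub ((hM.stronglyAdapted m).mono (ℱ.le m))
    have hT_sm : ∀ i : ℕ, StronglyMeasurable (fun ω => truncAt (a i) (M (m+1) ω - M m ω)) :=
      fun i => (continuous_truncAt (a i) (ha i).le).comp_stronglyMeasurable hD_sm
    have hQd_sm : StronglyMeasurable Qd := by
      apply Finset.stronglyMeasurable_fun_sum
      exact fun i _ => (hT_sm i).const_mul (c i)
    -- integrability
    have hZm_int : Integrable (Z m) μ := by
      refine (integrable_const (Real.exp ((m:ℝ)*(1/2)))).mono' hZm_asm (ae_of_all _ fun ω => ?_)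
      rw [Real.norm_eq_abs, abs_of_pos (hZpos m ω)]
      exact hZle m ω
    have hZm1_int : Integrable (Z (m+1)) μ := by
      refine (integrable_const (Real.exp (((m:ℝ)+1)*(1/2)))).mono'
        ((Z_stronglyMeasurable hM.stronglyAdapted t (m+1)).mono (ℱ.le (m+1))).aestronglyMeasurable
        (ae_of_all _ fun ω => ?_)
      rw [Real.norm_eq_abs, abs_of_pos (hZpos (m+1) ω)]
      have := hZle (m+1) ω
      push_cast at this
      exact this
    have hT_int : ∀ i : ℕ, Integrable (fun ω => truncAt (a i) (M (m+1) ω - M m ω)) μ := by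
      intro i
      refine (integrable_const (a i)).mono' (hT_sm i).aestronglyMeasurable
        (ae_of_all _ fun ω => ?_)
      rw [Real.norm_eq_abs]
      exact abs_truncAt_le _ _ (ha i).le
    have hQd_int : Integrable Qd μ := by
      rw [hQd]
      apply integrable_finset_sum
      exact fun i _ => ((hT_int i).const_mul (c i))
    have hQd_bound : ∀ ω, |Qd ω| ≤ B := by
      intro ω
      rw [hQd]
      refine le_trans (Finset.abs_sum_le_sum_abs _ _) (Finset.sum_le_sum fun i _ => ?_)
      rw [abs_mul, abs_of_nonneg (hc i)]
      exact mul_le_mul_of_nonneg_left (abs_truncAt_le _ _ (ha i).le) (hc i)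
    have hZQ_int : Integrable (Z m * Qd) μ := by
      refine (integrable_const (Real.exp ((m:ℝ)*(1/2)) * B)).mono'
        (hZm_asm.mul hQd_sm.aestronglyMeasurable) (ae_of_all _ fun ω => ?_)
      rw [Pi.mul_apply, Real.norm_eq_abs, abs_mul, abs_of_pos (hZpos m ω)]
      have h0B : (0:ℝ) ≤ B := le_trans (abs_nonneg _) (hQd_bound ω)
      exact mul_le_mul (hZle m ω) (hQd_bound ω) (abs_nonneg _) (Real.exp_pos _).le
    -- pointwise bound
    have hpoint : ∀ ω, Z (m+1) ω ≤ (1+ε) * Z m ω + (Z m * Qd) ω := by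
      intro ω
      rw [hZsucc ω, Pi.mul_apply]
      have h := mul_le_mul_of_nonneg_left (hpt (M (m+1) ω - M m ω)) (hZpos m ω).le
      calc Z m ω * Real.exp (t*(M (m+1) ω - M m ω) - t^2*(M (m+1) ω - M m ω)^2/2)
          ≤ Z m ω * (1 + ε + ∑ i ∈ range K, c i * truncAt (a i) (M (m+1) ω - M m ω)) := h
        _ = (1+ε) * Z m ω + Z m ω * Qd ω := by rw [hQd]; ring
    -- conditional expectation step
    have hm : ℱ m ≤ m0 := ℱ.le m
    haveI hsf : SigmaFinite (μ.trim hm) := by infer_instance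
    have hpull : μ[Z m * Qd|ℱ m] =ᵐ[μ] Z m * μ[Qd|ℱ m] :=
      condExp_mul_of_stronglyMeasurable_left hZm_sm hZQ_int hQd_int
    have hterm : ∀ i : ℕ, ∀ᵐ ω ∂μ,
        (μ[fun ω' => c i * truncAt (a i) (M (m+1) ω' - M m ω')|ℱ m]) ω ≤ 0 := by
      intro i
      have hsm : (fun ω' => c i * truncAt (a i) (M (m+1) ω' - M m ω'))
          = c i • (fun ω' => truncAt (a i) (M (m+1) ω' - M m ω')) := by
        funext ω'; simp [smul_eq_mul]
      have hs := condExp_smul (μ := μ) (m := ℱ m) (c i)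
        (fun ω' => truncAt (a i) (M (m+1) ω' - M m ω'))
      have hheavy' := hheavy (m+1) (Nat.le_add_left 1 m) (a i) (ha i)
      simp only [Nat.add_sub_cancel] at hheavy'
      rw [hsm]
      filter_upwards [hs, hheavy'] with ω hω1 hω2
      rw [hω1, Pi.smul_apply, smul_eq_mul]
      exact mul_nonpos_iff.2 (Or.inl ⟨hc i, hω2⟩)
    have hsum_eq : Qd = ∑ i ∈ range K,
        (fun ω' => c i * truncAt (a i) (M (m+1) ω' - M m ω')) := by
      funext ω'
      rw [hQd, Finset.sum_apply]
    have h1 : μ[Qd|ℱ m] =ᵐ[μ] ∑ i ∈ range K,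
        μ[fun ω' => c i * truncAt (a i) (M (m+1) ω' - M m ω')|ℱ m] := by
      rw [hsum_eq]
      exact condExp_finset_sum (fun i _ => (hT_int i).const_mul (c i)) (ℱ m)
    have hcond_le : ∀ᵐ ω ∂μ, (μ[Qd|ℱ m]) ω ≤ 0 := by
      filter_upwards [h1, ae_all_iff.2 hterm] with ω hω1 hω2
      rw [hω1, Finset.sum_apply]
      exact Finset.sum_nonpos fun i _ => hω2 i
    have hZQ_nonpos : ∫ ω, (Z m * Qd) ω ∂μ ≤ 0 := by
      have e1 : ∫ ω, (Z m * Qd) ω ∂μ = ∫ ω, (μ[Z m * Qd|ℱ m]) ω ∂μ :=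
        (integral_condExp hm).symm
      have e2 : ∫ ω, (μ[Z m * Qd|ℱ m]) ω ∂μ = ∫ ω, (Z m * μ[Qd|ℱ m]) ω ∂μ :=
        integral_congr_ae hpull
      rw [e1, e2]
      apply integral_nonpos_of_ae
      filter_upwards [hcond_le] with ω hω
      rw [Pi.mul_apply]
      exact mul_nonpos_iff.2 (Or.inl ⟨(hZpos m ω).le, hω⟩)
    -- put it all together
    have step1 : ∫ ω, Z (m+1) ω ∂μ ≤ ∫ ω, ((1+ε) * Z m ω + (Z m * Qd) ω) ∂μ := by
      apply integral_mono hZm1_int _ hpoint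
      exact (hZm_int.const_mul (1+ε)).add hZQ_int
    have step2 : ∫ ω, ((1+ε) * Z m ω + (Z m * Qd) ω) ∂μ
        = (1+ε) * ∫ ω, Z m ω ∂μ + ∫ ω, (Z m * Qd) ω ∂μ := by
      rw [integral_add (hZm_int.const_mul (1+ε)) hZQ_int, integral_const_mul]
    have step3 : (1+ε) * ∫ ω, Z m ω ∂μ ≤ (1+ε) * (1+ε)^m :=
      mul_le_mul_of_nonneg_left ih (by positivity)
    calc ∫ ω, Z (m+1) ω ∂μ ≤ (1+ε) * ∫ ω, Z m ω ∂μ + ∫ ω, (Z m * Qd) ω ∂μ := by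
          rw [← step2]; exact step1
      _ ≤ (1+ε) * (1+ε)^m + 0 := add_le_add step3 hZQ_nonpos
      _ = (1+ε)^(m+1) := by rw [add_zero, pow_succ]; ring

end Prob

/-- Theorem 4.1: for a locally square integrable real martingale `M` with `M 0 = 0` which is
heavy on left, for all `x, y > 0`, `P(M n ≥ x, [M]_n ≤ y) ≤ exp(−x²/(2y))`. -/
theorem heavyOnLeft_martingale_exponential_inequality
    {Ω : Type*} {m0 : MeasurableSpace Ω} {μ : Measure Ω} [IsProbabilityMeasure μ]
    {ℱ : Filtration ℕ m0} {M : ℕ → Ω → ℝ}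
    (hM : Martingale M ℱ μ) (hM0 : M 0 = 0) (hMsq : ∀ n, MemLp (M n) 2 μ)
    (hheavy : Martingale.IsHeavyOnLeft μ ℱ M)
    (n : ℕ) {x y : ℝ} (hx : 0 < x) (hy : 0 < y) :
    μ {ω | x ≤ M n ω ∧ (∑ k ∈ Finset.Icc 1 n, (M k ω - M (k - 1) ω) ^ 2) ≤ y}
      ≤ ENNReal.ofReal (Real.exp (-x ^ 2 / (2 * y))) := by
  set t : ℝ := x / y with htdef
  have ht : 0 < t := by positivity
  set Z : Ω → ℝ := fun ω => Real.exp (∑ k ∈ Finset.Icc 1 n,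
    (t*(M k ω - M (k-1) ω) - t^2*(M k ω - M (k-1) ω)^2/2)) with hZ
  -- the integral of Z is at most 1
  have hbound : ∀ ε : ℝ, 0 < ε → ∫ ω, Z ω ∂μ ≤ (1+ε)^n := fun ε hε =>
    integral_Z_le hM hheavy ht hε n
  have hE : ∫ ω, Z ω ∂μ ≤ 1 := by
    have hlim : Filter.Tendsto (fun ε : ℝ => (1+ε)^n) (nhdsWithin 0 (Set.Ioi 0)) (nhds 1) := by
      have hcont : Continuous (fun ε : ℝ => (1+ε)^n) := by fun_prop
      have h0 := hcont.tendsto 0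
      simp only [add_zero] at h0
      norm_num at h0
      exact h0.mono_left nhdsWithin_le_nhds
    exact ge_of_tendsto hlim (eventually_mem_nhdsWithin.mono fun ε hε => hbound ε hε)
  -- integrability and measurability of Z
  have hZ_sm : StronglyMeasurable Z :=
    (Z_stronglyMeasurable hM.stronglyAdapted t n).mono (ℱ.le n)
  have hZ_int : Integrable Z μ := by
    refine (integrable_const (Real.exp ((n:ℝ)*(1/2)))).mono' hZ_sm.aestronglyMeasurable
      (ae_of_all _ fun ω => ?_)
    rw [Real.norm_eq_abs, abs_of_pos (Real.exp_pos _)]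
    exact Z_bound t n ω
  -- the target set
  set A : Set Ω := {ω | x ≤ M n ω ∧ (∑ k ∈ Finset.Icc 1 n, (M k ω - M (k - 1) ω) ^ 2) ≤ y}
    with hA
  have hMn_sm : ∀ k : ℕ, StronglyMeasurable (M k) :=
    fun k => (hM.stronglyAdapted k).mono (ℱ.le k)
  have hS_sm : StronglyMeasurable (fun ω => ∑ k ∈ Finset.Icc 1 n, (M k ω - M (k-1) ω)^2) := by
    apply Finset.stronglyMeasurable_fun_sum
    intro k _
    exact (continuous_pow 2).comp_stronglyMeasurable ((hMn_sm k).sub (hMn_sm (k-1)))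
  have hAmeas : MeasurableSet A := by
    rw [hA, Set.setOf_and]
    exact (measurableSet_le measurable_const (hMn_sm n).measurable).inter
      (measurableSet_le hS_sm.measurable measurable_const)
  -- telescoping
  have htel : ∀ (m : ℕ) (ω : Ω), ∑ k ∈ Finset.Icc 1 m, (M k ω - M (k-1) ω) = M m ω := by
    intro m
    induction m with
    | zero =>
      intro ω
      rw [show Finset.Icc 1 0 = ∅ from rfl, Finset.sum_empty, hM0]
      rfl
    | succ m ih =>
      intro ω
      rw [Finset.sum_Icc_succ_top (Nat.le_add_left 1 m), ih ω]
      simp only [Nat.add_sub_cancel]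
      ring
  -- lower bound of Z on A
  have hZA : ∀ ω ∈ A, Real.exp (x^2/(2*y)) ≤ Z ω := by
    intro ω hω
    obtain ⟨hω1, hω2⟩ := hω
    rw [hZ]
    apply Real.exp_le_exp.2
    have hsplit : ∑ k ∈ Finset.Icc 1 n, (t*(M k ω - M (k-1) ω) - t^2*(M k ω - M (k-1) ω)^2/2)
        = t * (∑ k ∈ Finset.Icc 1 n, (M k ω - M (k-1) ω))
          - t^2/2 * (∑ k ∈ Finset.Icc 1 n, (M k ω - M (k-1) ω)^2) := by
      rw [Finset.mul_sum, Finset.mul_sum, ← Finset.sum_sub_distrib]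
      apply Finset.sum_congr rfl
      intros
      ring
    rw [hsplit, htel n ω]
    have h1 : t * x ≤ t * M n ω := mul_le_mul_of_nonneg_left hω1 ht.le
    have h2 : t^2/2 * (∑ k ∈ Finset.Icc 1 n, (M k ω - M (k-1) ω)^2) ≤ t^2/2 * y :=
      mul_le_mul_of_nonneg_left hω2 (by positivity)
    have h3 : x^2/(2*y) = t * x - t^2/2 * y := by
      rw [htdef]
      field_simp
      ring
    linarith
  -- Markov
  have h1 : Real.exp (x^2/(2*y)) * (μ A).toReal ≤ 1 := by
    calc Real.exp (x^2/(2*y)) * (μ A).toReal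
        = ∫ _ω in A, Real.exp (x^2/(2*y)) ∂μ := by
          rw [setIntegral_const, smul_eq_mul, mul_comm, measureReal_def]
      _ ≤ ∫ ω in A, Z ω ∂μ := by
          apply setIntegral_mono_on (integrableOn_const (measure_ne_top μ A))
            hZ_int.integrableOn hAmeas
          exact fun ω hω => hZA ω hω
      _ ≤ ∫ ω, Z ω ∂μ :=
          setIntegral_le_integral hZ_int (ae_of_all _ fun ω => (Real.exp_pos _).le)
      _ ≤ 1 := hE
  rw [ENNReal.le_ofReal_iff_toReal_le (measure_ne_top μ A) (Real.exp_pos _).le]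
  have hinv : Real.exp (-x^2/(2*y)) = (Real.exp (x^2/(2*y)))⁻¹ := by
    rw [← Real.exp_neg]
    congr 1
    ring
  rw [hinv]
  nlinarith [h1, mul_inv_cancel₀ (ne_of_gt (Real.exp_pos (x^2/(2*y)))),
    Real.exp_pos (x^2/(2*y)), ENNReal.toReal_nonneg (a := μ A)]
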